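/- Finite summation identity (equation f2b1other): For all integers N, t ≥ 0 and all a ∈ ℂ with 1 + a q^j ≠ 0 for 0 ≤ j < N + t, one has Σ_{i=0}^{N} (−1)^i q^{binom(i,2)} (q;q)_N / ((q;q)_i (q;q)_{N−i} (−a;q)_{N−i+t}) = (−1)^N a^N q^{N(N+t−1)} / (−a;q)_{N+t}, where binom(i,2) = i(i−1)/2. -/

import Mathlib

open Finset

noncomputable def qPoch (a q : ℂ) (n : ℕ) : ℂ :=
  ∏ t ∈ Finset.range n, (1 - a * q ^ t)

noncomputable def qPochInf (a q : ℂ) : ℂ :=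
  ∏' t : ℕ, (1 - a * q ^ t)

def IsBaileyPair (q a : ℂ) (α β : ℕ → ℂ) : Prop :=
  ∀ n : ℕ, β n =
    ∑ t ∈ Finset.range (n + 1), α t / (qPoch q q (n - t) * qPoch (a * q) q (n + t))

lemma qPoch_succ (a q : ℂ) (n : ℕ) :
    qPoch a q (n + 1) = qPoch a q n * (1 - a * q ^ n) :=
  Finset.prod_range_succ _ _

lemma qPoch_zero (a q : ℂ) : qPoch a q 0 = 1 := rfl

lemma hP_of_hfac (q : ℂ) (hfac : ∀ n : ℕ, (1 : ℂ) - q * q ^ n ≠ 0) (n : ℕ) :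
    qPoch q q n ≠ 0 := by
  unfold qPoch
  exact Finset.prod_ne_zero_iff.mpr fun t _ => hfac t

lemma hQ_ne (q a : ℂ) (m : ℕ) (h : ∀ j : ℕ, j < m → 1 + a * q ^ j ≠ 0) :
    qPoch (-a) q m ≠ 0 := by
  unfold qPoch
  refine Finset.prod_ne_zero_iff.mpr fun t ht => ?_
  have := h t (Finset.mem_range.mp ht)
  intro hc; apply this; linear_combination hc

noncomputable def Tm (q a : ℂ) (N t i : ℕ) : ℂ :=
  (-1) ^ i * q ^ (i.choose 2) * qPoch q q N /
    (qPoch q q i * qPoch q q (N - i) * qPoch (-a) q (N - i + t))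

noncomputable def Uq (q a : ℂ) (N t j : ℕ) : ℂ :=
  (-1) ^ j * q ^ (j.choose 2 + j) * qPoch q q N /
    (qPoch q q j * qPoch q q (N - j) * qPoch (-a) q (N - j + t + 1))

noncomputable def Vq (q a : ℂ) (N t j : ℕ) : ℂ :=
  (-1) ^ (j + 1) * q ^ ((j + 1).choose 2) * qPoch q q N /
    (qPoch q q j * qPoch q q (N - j) * qPoch (-a) q (N - j + t))

lemma choose_succ_two (j : ℕ) : (j + 1).choose 2 = j.choose 2 + j := by
  rw [Nat.choose_succ_succ]
  simp [Nat.choose_one_right, Nat.add_comm]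

lemma pascal_term (q a : ℂ) (hfac : ∀ n : ℕ, (1 : ℂ) - q * q ^ n ≠ 0)
    (m t j : ℕ) :
    Tm q a (j + m + 1 + 1) t (j + 1) =
      Uq q a (j + m + 1) t (j + 1) + Vq q a (j + m + 1) t j := by
  have hP := hP_of_hfac q hfac
  have e1 : j + m + 1 + 1 - (j + 1) = m + 1 := by omega
  have e2 : j + m + 1 - (j + 1) = m := by omega
  have e3 : j + m + 1 - j = m + 1 := by omega
  unfold Tm Uq Vq
  rw [e1, e2, e3]
  have e4 : m + 1 + t = m + t + 1 := by omega
  rw [e4, choose_succ_two]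
  rcases em (qPoch (-a) q (m + t + 1) = 0) with h7 | h7
  · rw [h7]; simp
  · have hb : qPoch q q (j + 1) * qPoch q q m * qPoch (-a) q (m + t + 1) ≠ 0 :=
      mul_ne_zero (mul_ne_zero (hP _) (hP _)) h7
    have hd : qPoch q q j * qPoch q q (m + 1) * qPoch (-a) q (m + t + 1) ≠ 0 :=
      mul_ne_zero (mul_ne_zero (hP _) (hP _)) h7
    have hx : qPoch q q (j + 1) * qPoch q q (m + 1) * qPoch (-a) q (m + t + 1) ≠ 0 :=
      mul_ne_zero (mul_ne_zero (hP _) (hP _)) h7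
    rw [div_add_div _ _ hb hd, div_eq_div_iff hx (mul_ne_zero hb hd)]
    rw [qPoch_succ q q (j + m + 1), qPoch_succ q q m, qPoch_succ q q j]
    ring

lemma combine_term (q a : ℂ) (hfac : ∀ n : ℕ, (1 : ℂ) - q * q ^ n ≠ 0)
    (m t j : ℕ) (hQ : qPoch (-a) q (m + t) ≠ 0) (hfa : 1 + a * q ^ (m + t) ≠ 0) :
    Uq q a (j + m) t j + Vq q a (j + m) t j =
      (-(a * q ^ (j + m + t))) * Tm q a (j + m) (t + 1) j := by
  have hP := hP_of_hfac q hfac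
  have e1 : j + m - j = m := by omega
  have e2 : m + (t + 1) = m + t + 1 := by omega
  unfold Tm Uq Vq
  rw [e1, e2, choose_succ_two]
  rw [qPoch_succ (-a) q (m + t)]
  have hfa' : 1 - -a * q ^ (m + t) ≠ 0 := by
    intro h; apply hfa; linear_combination h
  have hDu : qPoch q q j * qPoch q q m *
      (qPoch (-a) q (m + t) * (1 - -a * q ^ (m + t))) ≠ 0 :=
    mul_ne_zero (mul_ne_zero (hP _) (hP _)) (mul_ne_zero hQ hfa')
  have hDv : qPoch q q j * qPoch q q m * qPoch (-a) q (m + t) ≠ 0 :=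
    mul_ne_zero (mul_ne_zero (hP _) (hP _)) hQ
  rw [div_add_div _ _ hDu hDv, ← mul_div_assoc,
    div_eq_div_iff (mul_ne_zero hDu hDv) hDu]
  ring

lemma edge0 (q a : ℂ) (hfac : ∀ n : ℕ, (1 : ℂ) - q * q ^ n ≠ 0) (N t : ℕ) :
    Tm q a (N + 1) t 0 = Uq q a N t 0 := by
  have hP := hP_of_hfac q hfac
  unfold Tm Uq
  simp only [Nat.sub_zero, Nat.choose, pow_zero, one_mul, qPoch_zero]
  have e : N + 1 + t = N + t + 1 := by omega
  rw [e]
  rcases em (qPoch (-a) q (N + t + 1) = 0) with h7 | h7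
  · rw [h7]; simp
  · rw [div_eq_div_iff (mul_ne_zero (hP _) h7) (mul_ne_zero (hP _) h7)]
    ring

lemma edgeN (q a : ℂ) (hfac : ∀ n : ℕ, (1 : ℂ) - q * q ^ n ≠ 0) (N t : ℕ) :
    Tm q a (N + 1) t (N + 1) = Vq q a N t N := by
  have hP := hP_of_hfac q hfac
  unfold Tm Vq
  rw [Nat.sub_self, Nat.sub_self]
  simp only [qPoch_zero, one_mul, mul_one]
  rcases em (qPoch (-a) q (0 + t) = 0) with h7 | h7
  · rw [h7]; simp
  · rw [div_eq_div_iff (mul_ne_zero (hP _) h7) (mul_ne_zero (hP _) h7)]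
    ring

lemma key (q a : ℂ) (hfac : ∀ n : ℕ, (1 : ℂ) - q * q ^ n ≠ 0) :
    ∀ N t : ℕ, (∀ j : ℕ, j < N + t → 1 + a * q ^ j ≠ 0) →
      ∑ i ∈ Finset.range (N + 1), Tm q a N t i =
        (-1) ^ N * a ^ N * q ^ (N * (N + t - 1)) / qPoch (-a) q (N + t) := by
  intro N
  induction N with
  | zero => intro t ha; simp [Tm, qPoch_zero]
  | succ N ih =>
    intro t ha
    have hP := hP_of_hfac q hfac
    have hQ : ∀ m : ℕ, m ≤ N + 1 + t → qPoch (-a) q m ≠ 0 := fun m hm =>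
      hQ_ne q a m (fun j hj => ha j (by omega))
    have step1 : ∑ i ∈ Finset.range (N + 1 + 1), Tm q a (N + 1) t i =
        ∑ j ∈ Finset.range (N + 1), (Uq q a N t j + Vq q a N t j) := by
      rw [Finset.sum_range_succ' (Tm q a (N + 1) t) (N + 1), Finset.sum_range_succ]
      rw [Finset.sum_add_distrib]
      rw [Finset.sum_range_succ' (Uq q a N t) N, Finset.sum_range_succ (Vq q a N t) N]
      have hterm : ∀ i ∈ Finset.range N,
          Tm q a (N + 1) t (i + 1) = Uq q a N t (i + 1) + Vq q a N t i := by
        intro i hi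
        have hiN : i < N := Finset.mem_range.mp hi
        have h := pascal_term q a hfac (N - i - 1) t i
        have e : i + (N - i - 1) + 1 = N := by omega
        rwa [e] at h
      rw [Finset.sum_congr rfl hterm, Finset.sum_add_distrib]
      rw [edge0 q a hfac N t, edgeN q a hfac N t]
      ring
    have step2 : ∀ j ∈ Finset.range (N + 1),
        Uq q a N t j + Vq q a N t j = (-(a * q ^ (N + t))) * Tm q a N (t + 1) j := by
      intro j hj
      have hjN : j ≤ N := by have := Finset.mem_range.mp hj; omega
      have h := combine_term q a hfac (N - j) t j
        (hQ (N - j + t) (by omega)) (ha (N - j + t) (by omega))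
      have e : j + (N - j) = N := by omega
      rwa [e] at h
    rw [step1, Finset.sum_congr rfl step2, ← Finset.mul_sum,
      ih (t + 1) (fun j hj => ha j (by omega))]
    have e1 : N + (t + 1) - 1 = N + t := by omega
    have e2 : N + (t + 1) = N + 1 + t := by omega
    have e3 : N + 1 + t - 1 = N + t := by omega
    rw [e1, e2, e3]
    have hQ' := hQ (N + 1 + t) le_rfl
    field_simp
    ring

theorem eqn_f2b1other (q a : ℂ) (hq0 : 0 < ‖q‖) (hq1 : ‖q‖ < 1)
    (N t : ℕ) (ha : ∀ j : ℕ, j < N + t → 1 + a * q ^ j ≠ 0) :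
    ∑ i ∈ Finset.range (N + 1),
      (-1 : ℂ) ^ i * q ^ (i.choose 2) * qPoch q q N /
        (qPoch q q i * qPoch q q (N - i) * qPoch (-a) q (N - i + t)) =
    (-1 : ℂ) ^ N * a ^ N * q ^ (N * (N + t - 1)) / qPoch (-a) q (N + t) := by
  have hfac : ∀ n : ℕ, (1 : ℂ) - q * q ^ n ≠ 0 := by
    intro n h
    have h1 : q * q ^ n = 1 := by linear_combination -h
    have h2 : ‖q * q ^ n‖ = 1 := by rw [h1]; simp
    rw [norm_mul, norm_pow] at h2
    have h3 : ‖q‖ ^ n ≤ 1 :=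
      pow_le_one₀ (norm_nonneg q) hq1.le
    nlinarith [norm_nonneg q]
  have := key q a hfac N t ha
  simpa only [Tm] using this
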